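/- Let τ : Ω → Ω be an ergodic measure-preserving transformation on a nonatomic probability space (Ω,ℬ,μ). Then for every integer n ≥ 1 and every ε > 0 there exists B ∈ ℬ such that B, τ⁻¹(B), …, τ^{-(n-1)}(B) are pairwise disjoint and μ(Ω ∖ ⋃_{i=0}^{n-1} τ^{-i}(B)) < ε. -/

import Mathlib

open MeasureTheory Set ENNReal

lemma kr_small_sets {Ω : Type*} [MeasurableSpace Ω] (μ : Measure Ω)
    [IsProbabilityMeasure μ]
    (hna : ∀ A : Set Ω, MeasurableSet A → 0 < μ A →
      ∃ B : Set Ω, MeasurableSet B ∧ B ⊆ A ∧ 0 < μ B ∧ μ B < μ A) :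
    ∀ m : ℕ, ∃ A : Set Ω, MeasurableSet A ∧ 0 < μ A ∧ μ A ≤ 2⁻¹ ^ m := by
  intro m
  induction m with
  | zero =>
    exact ⟨univ, MeasurableSet.univ, by simp, by simp⟩
  | succ m ih =>
    obtain ⟨A, hA, hApos, hAle⟩ := ih
    obtain ⟨B, hB, hBA, hBpos, hBlt⟩ := hna A hA hApos
    have hAfin : μ A ≠ ⊤ := (measure_lt_top μ A).ne
    have hdiff : μ (A \ B) = μ A - μ B := measure_diff hBA hB.nullMeasurableSet ((lt_of_lt_of_le hBlt le_top).ne)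
    have hsum : μ B + μ (A \ B) = μ A := by
      rw [hdiff]
      exact add_tsub_cancel_of_le hBlt.le
    rcases le_total (μ B) (μ (A \ B)) with h | h
    · refine ⟨B, hB, hBpos, ?_⟩
      have h2 : μ B + μ B ≤ μ A := by
        calc μ B + μ B ≤ μ B + μ (A \ B) := by gcongr
        _ = μ A := hsum
      have : 2 * μ B ≤ 2⁻¹ ^ m := by
        rw [two_mul]; exact h2.trans hAle
      calc μ B = 2⁻¹ * (2 * μ B) := by
            rw [← mul_assoc, ENNReal.inv_mul_cancel (by norm_num) (by norm_num), one_mul]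
        _ ≤ 2⁻¹ * 2⁻¹ ^ m := by gcongr
        _ = 2⁻¹ ^ (m + 1) := by ring
    · have hdpos : 0 < μ (A \ B) := by
        rw [hdiff]
        exact tsub_pos_of_lt hBlt
      refine ⟨A \ B, hA.diff hB, hdpos, ?_⟩
      have h2 : μ (A \ B) + μ (A \ B) ≤ μ A := by
        calc μ (A \ B) + μ (A \ B) ≤ μ B + μ (A \ B) := by gcongr
        _ = μ A := hsum
      have : 2 * μ (A \ B) ≤ 2⁻¹ ^ m := by
        rw [two_mul]; exact h2.trans hAle
      calc μ (A \ B) = 2⁻¹ * (2 * μ (A \ B)) := by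
            rw [← mul_assoc, ENNReal.inv_mul_cancel (by norm_num) (by norm_num), one_mul]
        _ ≤ 2⁻¹ * 2⁻¹ ^ m := by gcongr
        _ = 2⁻¹ ^ (m + 1) := by ring

lemma kr_sweep {Ω : Type*} [MeasurableSpace Ω] (μ : Measure Ω)
    [IsProbabilityMeasure μ] (τ : Ω → Ω) (hτ : Measurable τ)
    (hmp : ∀ A : Set Ω, MeasurableSet A → μ (τ ⁻¹' A) = μ A)
    (herg : ∀ A : Set Ω, MeasurableSet A → μ (symmDiff (τ ⁻¹' A) A) = 0 →
      μ A = 0 ∨ μ A = 1)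
    (A : Set Ω) (hA : MeasurableSet A) (hApos : 0 < μ A) :
    μ (⋃ k : ℕ, τ^[k] ⁻¹' A) = 1 := by
  set U : Set Ω := ⋃ k : ℕ, τ^[k] ⁻¹' A with hU
  have hUmeas : MeasurableSet U :=
    MeasurableSet.iUnion fun k => (hτ.iterate k) hA
  have hpre : τ ⁻¹' U = ⋃ k : ℕ, τ^[k + 1] ⁻¹' A := by
    rw [hU, preimage_iUnion]
    exact iUnion_congr fun k => by rw [← preimage_comp, ← Function.iterate_succ]
  have hsub : τ ⁻¹' U ⊆ U := by
    rw [hpre]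
    exact iUnion_subset fun k => subset_iUnion_of_subset (k + 1) subset_rfl
  have hdiff : μ (symmDiff (τ ⁻¹' U) U) = 0 := by
    rw [symmDiff_of_le hsub,
      measure_diff hsub (hτ hUmeas).nullMeasurableSet (measure_lt_top μ _).ne,
      hmp U hUmeas, tsub_self]
  rcases herg U hUmeas hdiff with h | h
  · exfalso
    have : μ A ≤ μ U := measure_mono (subset_iUnion_of_subset 0 (by simp))
    rw [h] at this
    exact hApos.ne' (le_antisymm this zero_le)
  · exact h

theorem kakutani_rokhlin_nonatomic {Ω : Type*} [MeasurableSpace Ω] (μ : Measure Ω)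
    [IsProbabilityMeasure μ] (τ : Ω → Ω) (hτ : Measurable τ)
    (hmp : ∀ A : Set Ω, MeasurableSet A → μ (τ ⁻¹' A) = μ A)
    (herg : ∀ A : Set Ω, MeasurableSet A → μ (symmDiff (τ ⁻¹' A) A) = 0 →
      μ A = 0 ∨ μ A = 1)
    (hna : ∀ A : Set Ω, MeasurableSet A → 0 < μ A →
      ∃ B : Set Ω, MeasurableSet B ∧ B ⊆ A ∧ 0 < μ B ∧ μ B < μ A)
    (n : ℕ) (hn : 1 ≤ n) (ε : ℝ) (hε : 0 < ε) :
    ∃ B : Set Ω, MeasurableSet B ∧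
      (∀ i j : ℕ, i < n → j < n → i ≠ j → Disjoint (τ^[i] ⁻¹' B) (τ^[j] ⁻¹' B)) ∧
      μ (univ \ ⋃ i ∈ Finset.range n, τ^[i] ⁻¹' B) < ENNReal.ofReal ε := by
  classical
  -- pick a small base set A
  have hεn : (0 : ℝ≥0∞) < ENNReal.ofReal ε / n := by
    apply ENNReal.div_pos (by simpa using hε) (by simp)
  obtain ⟨m, hm⟩ := ENNReal.exists_inv_two_pow_lt hεn.ne'
  obtain ⟨A, hA, hApos, hAle⟩ := kr_small_sets μ hna m
  have hAsmall : μ A < ENNReal.ofReal ε / n := lt_of_le_of_lt hAle hm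
  -- iterated measure preservation
  have hmp' : ∀ (k : ℕ) (S : Set Ω), MeasurableSet S → μ (τ^[k] ⁻¹' S) = μ S := by
    intro k
    induction k with
    | zero => intro S _; simp
    | succ k ih =>
      intro S hS
      rw [Function.iterate_succ, preimage_comp, hmp _ ((hτ.iterate k) hS), ih S hS]
  -- the base sweeps out everything
  have hU : μ (⋃ k : ℕ, τ^[k] ⁻¹' A) = 1 := kr_sweep μ τ hτ hmp herg A hA hApos
  -- first-hitting-time set
  set B : Set Ω :=
    ⋃ (a : ℕ) (_ : 0 < a ∧ n ∣ a),
      (τ^[a] ⁻¹' A ∩ ⋂ k ∈ Finset.range a, (τ^[k] ⁻¹' A)ᶜ) with hBdef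
  have hBmem : ∀ x : Ω, x ∈ B ↔
      ∃ a : ℕ, 0 < a ∧ n ∣ a ∧ τ^[a] x ∈ A ∧ ∀ k < a, τ^[k] x ∉ A := by
    intro x
    rw [hBdef]
    simp only [mem_iUnion, mem_inter_iff, mem_preimage, mem_iInter, Finset.mem_range,
      mem_compl_iff]
    constructor
    · rintro ⟨a, ⟨ha1, ha2⟩, hxA, hmin⟩
      exact ⟨a, ha1, ha2, hxA, hmin⟩
    · rintro ⟨a, ha1, ha2, hxA, hmin⟩
      exact ⟨a, ⟨ha1, ha2⟩, hxA, hmin⟩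
  have hBmeas : MeasurableSet B := by
    apply MeasurableSet.iUnion; intro a
    apply MeasurableSet.iUnion; intro _
    exact ((hτ.iterate a) hA).inter
      (MeasurableSet.biInter (Finset.range a).countable_toSet
        fun k _ => ((hτ.iterate k) hA).compl)
  refine ⟨B, hBmeas, ?_, ?_⟩
  · -- disjointness
    have key : ∀ i j : ℕ, i < j → j < n →
        Disjoint (τ^[i] ⁻¹' B) (τ^[j] ⁻¹' B) := by
      intro i j hij hjn
      rw [Set.disjoint_left]
      rintro x hxi hxj
      rw [mem_preimage, hBmem] at hxi hxj
      obtain ⟨a, hapos, hadvd, haA, hamin⟩ := hxi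
      obtain ⟨b, hbpos, hbdvd, hbA, hbmin⟩ := hxj
      -- rewrite iterates
      have haA' : τ^[a + i] x ∈ A := by
        rw [Function.iterate_add_apply]; exact haA
      have hbA' : τ^[b + j] x ∈ A := by
        rw [Function.iterate_add_apply]; exact hbA
      have hamin' : ∀ k, i ≤ k → k < a + i → τ^[k] x ∉ A := by
        intro k hk1 hk2
        have : τ^[k - i] (τ^[i] x) ∉ A := hamin _ (by omega)
        rwa [← Function.iterate_add_apply, Nat.sub_add_cancel hk1] at this
      have hbmin' : ∀ k, j ≤ k → k < b + j → τ^[k] x ∉ A := by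
        intro k hk1 hk2
        have : τ^[k - j] (τ^[j] x) ∉ A := hbmin _ (by omega)
        rwa [← Function.iterate_add_apply, Nat.sub_add_cancel hk1] at this
      have han : n ≤ a := Nat.le_of_dvd hapos hadvd
      have heq : a + i = b + j := by
        by_contra hne
        rcases Nat.lt_or_ge (a + i) (b + j) with h | h
        · exact hbmin' (a + i) (by omega) h haA'
        · exact hamin' (b + j) (by omega) (by omega) hbA'
      have hdvd : n ∣ (a - b) := (Nat.dvd_sub hadvd hbdvd)
      have : n ≤ a - b := Nat.le_of_dvd (by omega) hdvd
      omega
    intro i j hi hj hne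
    rcases Nat.lt_or_ge i j with h | h
    · exact key i j h hj
    · exact (key j i (by omega) hi).symm
  · -- measure of uncovered part
    have hcover : univ \ (⋃ i ∈ Finset.range n, τ^[i] ⁻¹' B) ⊆
        (univ \ ⋃ k : ℕ, τ^[k] ⁻¹' A) ∪ ⋃ k ∈ Finset.range n, τ^[k] ⁻¹' A := by
      intro x hx
      simp only [mem_diff, mem_univ, true_and, mem_iUnion, Finset.mem_range,
        not_exists] at hx
      by_cases hhit : ∃ k : ℕ, τ^[k] x ∈ A
      · refine mem_union_right _ ?_
        simp only [mem_iUnion, Finset.mem_range, mem_preimage]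
        by_contra hno
        push_neg at hno
        -- first hitting time
        have hm0 := Nat.find_spec hhit
        set M := Nat.find hhit with hMdef
        have hMmin : ∀ k < M, τ^[k] x ∉ A := fun k hk => Nat.find_min hhit hk
        have hMn : n ≤ M := by
          by_contra h
          exact hno M (by omega) hm0
        set i := M % n with hidef
        have hin : i < n := Nat.mod_lt _ (by omega)
        apply hx i hin
        rw [mem_preimage, hBmem]
        have hdm : i + n * (M / n) = M := by
          rw [hidef]; exact Nat.mod_add_div M n
        refine ⟨M - i, by omega, ⟨M / n, by omega⟩, ?_, ?_⟩
        · rw [← Function.iterate_add_apply, Nat.sub_add_cancel (by omega)]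
          exact hm0
        · intro k hk
          rw [← Function.iterate_add_apply]
          exact hMmin _ (by omega)
      · push_neg at hhit
        refine mem_union_left _ ?_
        simp only [mem_diff, mem_univ, true_and, mem_iUnion, mem_preimage]
        push_neg
        exact hhit
    have h1 : μ (univ \ ⋃ k : ℕ, τ^[k] ⁻¹' A) = 0 := by
      rw [measure_diff (subset_univ _)
        (MeasurableSet.iUnion fun k => (hτ.iterate k) hA).nullMeasurableSet
        (measure_lt_top μ _).ne, hU, measure_univ, tsub_self]
    calc μ (univ \ ⋃ i ∈ Finset.range n, τ^[i] ⁻¹' B)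
        ≤ μ ((univ \ ⋃ k : ℕ, τ^[k] ⁻¹' A) ∪ ⋃ k ∈ Finset.range n, τ^[k] ⁻¹' A) :=
          measure_mono hcover
      _ ≤ μ (univ \ ⋃ k : ℕ, τ^[k] ⁻¹' A) + μ (⋃ k ∈ Finset.range n, τ^[k] ⁻¹' A) :=
          measure_union_le _ _
      _ = μ (⋃ k ∈ Finset.range n, τ^[k] ⁻¹' A) := by rw [h1, zero_add]
      _ ≤ ∑ k ∈ Finset.range n, μ (τ^[k] ⁻¹' A) := measure_biUnion_finset_le _ _
      _ = ∑ k ∈ Finset.range n, μ A := by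
          apply Finset.sum_congr rfl; intro k _; exact hmp' k A hA
      _ = n * μ A := by simp [Finset.sum_const, mul_comm]
      _ < n * (ENNReal.ofReal ε / n) := by
          rw [ENNReal.mul_lt_mul_iff_right (Nat.cast_ne_zero.mpr (by omega)) (by simp)]
          exact hAsmall
      _ ≤ ENNReal.ofReal ε := by
          rw [ENNReal.mul_div_cancel (Nat.cast_ne_zero.mpr (by omega)) (by simp)]
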